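/- The number of ascent sequences of length n avoiding the pattern 011 is 2^{n−1} for n ≥ 1. -/

import Mathlib

open Filter Topology

/-- Number of ascents in a sequence (list) of naturals. -/
def asc (s : List ℕ) : ℕ :=
  ((s.zip s.tail).filter (fun p => p.1 < p.2)).length

/-- `s` is an ascent sequence: first entry `0`, and each later entry is at most
one more than the number of ascents of the preceding prefix. -/
def IsAscentSeq (s : List ℕ) : Prop :=
  (0 < s.length → s.getD 0 0 = 0) ∧
  ∀ i, 0 < i → i < s.length → s.getD i 0 ≤ asc (s.take i) + 1

/-- `s` is a weak ascent sequence: every entry is at most the number of ascents. -/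
def IsWeakAscentSeq (s : List ℕ) : Prop :=
  ∀ x ∈ s, x ≤ asc s

/-- `s` contains the pattern `p`: some subsequence of `s` is order-isomorphic
(including equalities) to `p`. -/
def ContainsPattern (s p : List ℕ) : Prop :=
  ∃ idx : Fin p.length → ℕ, StrictMono idx ∧ (∀ a, idx a < s.length) ∧
    ∀ a b : Fin p.length, p.get a < p.get b ↔ s.getD (idx a) 0 < s.getD (idx b) 0

def AvoidsPattern (s p : List ℕ) : Prop := ¬ ContainsPattern s p

/-- A pattern of length `j` is a permutation of `0,…,j-1`. -/
def IsPattern (p : List ℕ) : Prop := List.Perm p (List.range p.length)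

/-- Sum-indecomposable: no proper prefix whose entries are all smaller than
all entries of the complementary suffix. -/
def SumIndecomposable (p : List ℕ) : Prop :=
  ¬ ∃ i, 0 < i ∧ i < p.length ∧ ∀ x ∈ p.take i, ∀ y ∈ p.drop i, x < y

/-- Number of `p`-avoiding ascent sequences of length `k`. -/
noncomputable def ascentAvoidCount (p : List ℕ) (k : ℕ) : ℕ :=
  {s : List ℕ | s.length = k ∧ IsAscentSeq s ∧ AvoidsPattern s p}.ncard

/-- Number of `p`-avoiding weak ascent sequences of length `k`. -/
noncomputable def weakAvoidCount (p : List ℕ) (k : ℕ) : ℕ :=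
  {s : List ℕ | s.length = k ∧ IsWeakAscentSeq s ∧ AvoidsPattern s p}.ncard

def listMax (s : List ℕ) : ℕ := s.foldr max 0
def listMin (s : List ℕ) : ℕ := s.foldr min (listMax s)

/-- Reverse-complement map: `m j = max + min - n (k+1-j)`. -/
def revComp (s : List ℕ) : List ℕ :=
  s.reverse.map (fun x => listMax s + listMin s - x)

/-- Occurrence of pattern 000: three equal entries. -/
def Contains000 (s : List ℕ) : Prop :=
  ∃ a b c, a < b ∧ b < c ∧ c < s.length ∧
    s.getD a 0 = s.getD b 0 ∧ s.getD b 0 = s.getD c 0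

/-- Occurrence of pattern 100: `n i₁ > n i₂ = n i₃`. -/
def Contains100 (s : List ℕ) : Prop :=
  ∃ a b c, a < b ∧ b < c ∧ c < s.length ∧
    s.getD b 0 < s.getD a 0 ∧ s.getD b 0 = s.getD c 0

/-- Occurrence of pattern 110: `n i₁ = n i₂ > n i₃`. -/
def Contains110 (s : List ℕ) : Prop :=
  ∃ a b c, a < b ∧ b < c ∧ c < s.length ∧
    s.getD a 0 = s.getD b 0 ∧ s.getD c 0 < s.getD b 0

/-- Occurrence of pattern 120: `n i₂ > n i₁ > n i₃`. -/
def Contains120 (s : List ℕ) : Prop :=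
  ∃ a b c, a < b ∧ b < c ∧ c < s.length ∧
    s.getD a 0 < s.getD b 0 ∧ s.getD c 0 < s.getD a 0

/-- Occurrence of pattern 201: `n i₁ > n i₃ > n i₂`. -/
def Contains201 (s : List ℕ) : Prop :=
  ∃ a b c, a < b ∧ b < c ∧ c < s.length ∧
    s.getD c 0 < s.getD a 0 ∧ s.getD b 0 < s.getD c 0

/-- Occurrence of pattern 012: `n i₁ < n i₂ < n i₃`. -/
def Contains012 (s : List ℕ) : Prop :=
  ∃ a b c, a < b ∧ b < c ∧ c < s.length ∧
    s.getD a 0 < s.getD b 0 ∧ s.getD b 0 < s.getD c 0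

/-- Occurrence of pattern 011: `n i₁ < n i₂ = n i₃`. -/
def Contains011 (s : List ℕ) : Prop :=
  ∃ a b c, a < b ∧ b < c ∧ c < s.length ∧
    s.getD a 0 < s.getD b 0 ∧ s.getD b 0 = s.getD c 0

/-- Occurrence of pattern 021: `n i₁ < n i₃ < n i₂`. -/
def Contains021 (s : List ℕ) : Prop :=
  ∃ a b c, a < b ∧ b < c ∧ c < s.length ∧
    s.getD a 0 < s.getD c 0 ∧ s.getD c 0 < s.getD b 0

/-- Occurrence of pattern 102: `n i₂ < n i₁ < n i₃`. -/
def Contains102 (s : List ℕ) : Prop :=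
  ∃ a b c, a < b ∧ b < c ∧ c < s.length ∧
    s.getD b 0 < s.getD a 0 ∧ s.getD a 0 < s.getD c 0

/-- The construction `C = 0101⋯01 W̃₁⋯W̃ₖ` from weak ascent sequences. -/
def buildC (k : ℕ) (W : Fin k → List ℕ) : List ℕ :=
  (List.replicate k ([0,1] : List ℕ)).flatten ++
    (List.ofFn (fun h : Fin k =>
      (W h).map (fun x =>
        x + 1 + ∑ j ∈ Finset.univ.filter (fun j => j < h), listMax (W j)))).flatten

lemma asc_cons_cons (a b : ℕ) (t : List ℕ) :
    asc (a :: b :: t) = (if a < b then 1 else 0) + asc (b :: t) := by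
  by_cases h : a < b <;> simp [asc, h, Nat.add_comm]

lemma asc_concat : ∀ (s : List ℕ) (a x : ℕ),
    asc (a :: s ++ [x]) = asc (a :: s) + if (a :: s).getLast (by simp) < x then 1 else 0
  | [], a, x => by by_cases h : a < x <;> simp [asc, h]
  | b :: t, a, x => by
    rw [show (a :: b :: t) ++ [x] = a :: b :: (t ++ [x]) by simp, asc_cons_cons,
      show (b :: (t ++ [x])) = (b :: t) ++ [x] by simp, asc_concat t b x, asc_cons_cons]
    have : (a :: b :: t).getLast (by simp) = (b :: t).getLast (by simp) := by
      simp [List.getLast]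
    rw [this]; omega

lemma le_listMax {s : List ℕ} {x : ℕ} (h : x ∈ s) : x ≤ listMax s := by
  induction s with
  | nil => simp at h
  | cons a t ih =>
    rcases List.mem_cons.1 h with rfl | h
    · simp [listMax]
    · have := ih h; simp only [listMax, List.foldr_cons] at *; omega

lemma listMax_concat (s : List ℕ) (x : ℕ) : listMax (s ++ [x]) = max (listMax s) x := by
  induction s with
  | nil => simp [listMax]
  | cons a t ih => simp only [listMax, List.foldr_cons, List.cons_append] at *; omega

lemma isAscentSeq_concat {s : List ℕ} (hs : s ≠ []) (x : ℕ) :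
    IsAscentSeq (s ++ [x]) ↔ IsAscentSeq s ∧ x ≤ asc s + 1 := by
  have hlen : 0 < s.length := List.length_pos_iff.2 hs
  constructor
  · rintro ⟨h0, h1⟩
    refine ⟨⟨fun _ => ?_, fun i hi hilen => ?_⟩, ?_⟩
    · rw [← List.getD_append s [x] 0 0 hlen]; exact h0 (by simp only [List.length_append, List.length_singleton]; omega)
    · have := h1 i hi (by simp; omega)
      rwa [List.getD_append _ _ _ _ (by omega), List.take_append_of_le_length (by omega)] at this
    · have := h1 s.length hlen (by simp)
      rwa [List.take_append_of_le_length le_rfl, List.take_length,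
        show (s ++ [x]).getD s.length 0 = x by simp [List.getD]] at this
  · rintro ⟨⟨h0, h1⟩, hx⟩
    refine ⟨fun _ => ?_, fun i hi hilen => ?_⟩
    · rw [List.getD_append s [x] 0 0 hlen]; exact h0 hlen
    · simp only [List.length_append, List.length_singleton] at hilen
      rcases lt_or_eq_of_le (Nat.lt_succ_iff.1 hilen) with h | h
      · rw [List.getD_append _ _ _ _ h, List.take_append_of_le_length (by omega)]
        exact h1 i hi h
      · subst h
        rwa [show (s ++ [x]).getD s.length 0 = x by simp [List.getD],
          List.take_append_of_le_length le_rfl, List.take_length]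

lemma contains011_concat {s : List ℕ} {x : ℕ} :
    Contains011 (s ++ [x]) ↔ Contains011 s ∨
      ∃ a b, a < b ∧ b < s.length ∧ s.getD a 0 < s.getD b 0 ∧ s.getD b 0 = x := by
  constructor
  · rintro ⟨a, b, c, hab, hbc, hc, h1, h2⟩
    simp only [List.length_append, List.length_singleton] at hc
    rcases lt_or_eq_of_le (Nat.lt_succ_iff.1 hc) with h | h
    · left
      exact ⟨a, b, c, hab, hbc, h, by
        rwa [List.getD_append _ _ _ _ (by omega), List.getD_append _ _ _ _ (by omega)] at h1, by
        rwa [List.getD_append _ _ _ _ (by omega), List.getD_append _ _ _ _ (by omega)] at h2⟩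
    · right
      subst h
      refine ⟨a, b, hab, hbc, ?_, ?_⟩
      · rwa [List.getD_append _ _ _ _ (by omega), List.getD_append _ _ _ _ (by omega)] at h1
      · rwa [List.getD_append _ _ _ _ (by omega),
          show (s ++ [x]).getD s.length 0 = x by simp [List.getD]] at h2
  · rintro (⟨a, b, c, hab, hbc, hc, h1, h2⟩ | ⟨a, b, hab, hb, h1, h2⟩)
    · exact ⟨a, b, c, hab, hbc, by simp; omega, by
        rwa [List.getD_append _ _ _ _ (by omega), List.getD_append _ _ _ _ (by omega)], by
        rwa [List.getD_append _ _ _ _ (by omega), List.getD_append _ _ _ _ (by omega)]⟩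
    · refine ⟨a, b, s.length, hab, hb, by simp, ?_, ?_⟩
      · rwa [List.getD_append _ _ _ _ (by omega), List.getD_append _ _ _ _ (by omega)]
      · rwa [List.getD_append _ _ _ _ (by omega),
          show (s ++ [x]).getD s.length 0 = x by simp [List.getD]]

def InvP (s : List ℕ) : Prop :=
  asc s = listMax s ∧ ∀ v, 0 < v → v ≤ listMax s → v ∈ s

lemma mem_of_getD {s : List ℕ} {i : ℕ} (h : i < s.length) : s.getD i 0 ∈ s := by
  rw [List.getD_eq_getElem _ _ h]; exact List.getElem_mem h

lemma contains_of_mem {s : List ℕ} {x : ℕ} (hs : IsAscentSeq s) (hne : s ≠ [])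
    (hx : 0 < x) (hmem : x ∈ s) : Contains011 (s ++ [x]) := by
  obtain ⟨j, hj, hjx⟩ := List.mem_iff_getElem.1 hmem
  have hj0 : j ≠ 0 := by
    rintro rfl
    have := hs.1 (List.length_pos_iff.2 hne)
    rw [List.getD_eq_getElem _ _ hj] at this; omega
  refine contains011_concat.2 (Or.inr ⟨0, j, by omega, hj, ?_, ?_⟩)
  · rw [hs.1 (List.length_pos_iff.2 hne), List.getD_eq_getElem _ _ hj]; omega
  · rw [List.getD_eq_getElem _ _ hj]; exact hjx

lemma step_inv0 {s : List ℕ} (hne : s ≠ []) (h : InvP s) : InvP (s ++ [0]) := by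
  rcases s with _ | ⟨a, t⟩
  · exact absurd rfl hne
  constructor
  · rw [asc_concat, listMax_concat, if_neg (by omega), h.1]; omega
  · intro v hv hvle
    rw [listMax_concat] at hvle
    exact List.mem_append_left _ (h.2 v hv (by omega))

lemma step_inv1 {s : List ℕ} (hne : s ≠ []) (h : InvP s) : InvP (s ++ [listMax s + 1]) := by
  rcases s with _ | ⟨a, t⟩
  · exact absurd rfl hne
  have hlast : (a :: t).getLast (by simp) ∈ (a :: t) := List.getLast_mem _
  have hle := le_listMax hlast
  constructor
  · rw [asc_concat, listMax_concat, if_pos (by omega), h.1]; omega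
  · intro v hv hvle
    rw [listMax_concat] at hvle
    rcases Nat.lt_or_ge v (listMax (a :: t) + 1) with hlt | hge
    · exact List.mem_append_left _ (h.2 v hv (by omega))
    · exact List.mem_append_right _ (by simp; omega)

lemma avoid_concat0 {s : List ℕ} (h : ¬ Contains011 s) : ¬ Contains011 (s ++ [0]) := by
  intro hc
  rcases contains011_concat.1 hc with hc | ⟨a, b, hab, hb, h1, h2⟩
  · exact h hc
  · omega

lemma avoid_concat_max {s : List ℕ} (h : ¬ Contains011 s) :
    ¬ Contains011 (s ++ [listMax s + 1]) := by
  intro hc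
  rcases contains011_concat.1 hc with hc | ⟨a, b, hab, hb, h1, h2⟩
  · exact h hc
  · have := le_listMax (mem_of_getD hb)
    omega

lemma classify {s : List ℕ} {x : ℕ} (hne : s ≠ []) (hinv : InvP s)
    (hs : IsAscentSeq s) (ha : IsAscentSeq (s ++ [x])) (hav : ¬ Contains011 (s ++ [x])) :
    x = 0 ∨ x = listMax s + 1 := by
  have hx := ((isAscentSeq_concat hne x).1 ha).2
  rw [hinv.1] at hx
  by_contra hcon
  push_neg at hcon
  have hx1 : 0 < x := by omega
  have hxle : x ≤ listMax s := by omega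
  exact hav (contains_of_mem hs hne hx1 (hinv.2 x hx1 hxle))

def A (n : ℕ) : Set (List ℕ) := {s : List ℕ | s.length = n ∧ IsAscentSeq s ∧ ¬ Contains011 s}

lemma A_one : A 1 = {[0]} := by
  ext s
  simp only [A, Set.mem_setOf_eq, Set.mem_singleton_iff]
  constructor
  · rintro ⟨hlen, hasc, _⟩
    rcases s with _ | ⟨a, t⟩
    · simp at hlen
    · simp only [List.length_cons] at hlen
      have ht : t = [] := List.length_eq_zero_iff.1 (by omega)
      subst ht
      have := hasc.1 (by simp)
      simp [List.getD] at this
      simp [this]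
  · rintro rfl
    refine ⟨rfl, ⟨fun _ => rfl, fun i hi hlen => by simp at hlen; omega⟩, ?_⟩
    rintro ⟨a, b, c, hab, hbc, hc, _⟩
    simp at hc; omega

lemma invP_zero : InvP [0] := by
  constructor
  · simp [asc, listMax]
  · intro v hv hvle
    simp [listMax] at hvle; omega

lemma A_succ (n : ℕ) (hn : 1 ≤ n) (hinv : ∀ s ∈ A n, InvP s) :
    A (n + 1) = (fun t => t ++ [0]) '' A n ∪ (fun t => t ++ [listMax t + 1]) '' A n := by
  ext s
  constructor
  · rintro ⟨hlen, hasc, hav⟩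
    have hne : s ≠ [] := List.length_pos_iff.1 (by omega)
    obtain ⟨t, x, rfl⟩ : ∃ t x, s = t ++ [x] := ⟨s.dropLast, s.getLast hne,
      (List.dropLast_append_getLast hne).symm⟩
    have htlen : t.length = n := by simp at hlen; omega
    have htne : t ≠ [] := List.length_pos_iff.1 (by omega)
    have hta := (isAscentSeq_concat htne x).1 hasc
    have htav : ¬ Contains011 t := fun h => hav (contains011_concat.2 (Or.inl h))
    have htA : t ∈ A n := ⟨htlen, hta.1, htav⟩
    rcases classify htne (hinv t htA) hta.1 hasc hav with rfl | rfl
    · exact Or.inl ⟨t, htA, rfl⟩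
    · exact Or.inr ⟨t, htA, rfl⟩
  · rintro (⟨t, ⟨hlen, hasc, hav⟩, rfl⟩ | ⟨t, ⟨hlen, hasc, hav⟩, rfl⟩)
    · have htne : t ≠ [] := List.length_pos_iff.1 (by omega)
      exact ⟨by simp [hlen], (isAscentSeq_concat htne 0).2 ⟨hasc, by omega⟩, avoid_concat0 hav⟩
    · have htne : t ≠ [] := List.length_pos_iff.1 (by omega)
      have ht := hinv t ⟨hlen, hasc, hav⟩
      exact ⟨by simp [hlen], (isAscentSeq_concat htne _).2 ⟨hasc, by rw [ht.1]⟩,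
        avoid_concat_max hav⟩

lemma main : ∀ n, 1 ≤ n → (A n).Finite ∧ (A n).ncard = 2 ^ (n - 1) ∧ ∀ s ∈ A n, InvP s := by
  intro n hn
  induction n, hn using Nat.le_induction with
  | base =>
    rw [A_one]
    exact ⟨Set.finite_singleton _, by simp, by rintro s rfl; exact invP_zero⟩
  | succ n hn ih =>
    obtain ⟨hfin, hcard, hinv⟩ := ih
    have hseq := A_succ n hn hinv
    have hinj0 : Set.InjOn (fun t => t ++ [0]) (A n) := by
      intro t1 h1 t2 h2 h
      exact (List.append_inj h (by rw [h1.1, h2.1])).1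
    have hinj1 : Set.InjOn (fun t => t ++ [listMax t + 1]) (A n) := by
      intro t1 h1 t2 h2 h
      exact (List.append_inj h (by rw [h1.1, h2.1])).1
    have hdisj : Disjoint ((fun t => t ++ [0]) '' A n)
        ((fun t => t ++ [listMax t + 1]) '' A n) := by
      rw [Set.disjoint_left]
      rintro s ⟨t1, h1, rfl⟩ ⟨t2, h2, heq⟩
      have := (List.append_inj heq.symm (by rw [h1.1, h2.1])).2
      simp at this
    have hfin0 := hfin.image (fun t => t ++ [0])
    have hfin1 := hfin.image (fun t => t ++ [listMax t + 1])
    refine ⟨by rw [hseq]; exact hfin0.union hfin1, ?_, ?_⟩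
    · rw [hseq, Set.ncard_union_eq hdisj hfin0 hfin1,
        Set.ncard_image_of_injOn hinj0, Set.ncard_image_of_injOn hinj1, hcard]
      have h2 : n - 1 + 1 = n := by omega
      rw [show n + 1 - 1 = n from rfl]
      calc 2 ^ (n-1) + 2 ^ (n-1) = 2 ^ (n-1) * 2 := by ring
        _ = 2 ^ (n-1+1) := (pow_succ 2 (n-1)).symm
        _ = 2 ^ n := by rw [h2]
    · intro s hs
      rw [hseq] at hs
      rcases hs with ⟨t, ht, rfl⟩ | ⟨t, ht, rfl⟩
      · exact step_inv0 (List.length_pos_iff.1 (by have := ht.1; omega)) (hinv t ht)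
      · exact step_inv1 (List.length_pos_iff.1 (by have := ht.1; omega)) (hinv t ht)


/-- The number of 011-avoiding ascent sequences of length `n` is `2^(n-1)`. -/
theorem stmt12 (n : ℕ) (hn : 1 ≤ n) :
    {s : List ℕ | s.length = n ∧ IsAscentSeq s ∧ ¬ Contains011 s}.ncard =
      2 ^ (n - 1) := (main n hn).2.1
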